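/- If α ∈ ℝ is such that cot α is irrational (with sin α ≠ 0), then for every δ > 0 the set of real numbers of the form m·sin α + n·cos α with m, n ∈ ℤ and |m·cos α − n·sin α| < δ is relatively dense in ℝ. -/

import Mathlib

open Real

def RelativelyDense (E : Set ℝ) : Prop :=
  ∃ L > 0, ∀ a : ℝ, ∃ x ∈ E, x ∈ Set.Icc a (a + L)

set_option maxHeartbeats 1600000 in
theorem kronecker_relativelyDense (α : ℝ) (hsin : Real.sin α ≠ 0)
    (hirr : Irrational (Real.cos α / Real.sin α)) (δ : ℝ) (hδ : 0 < δ) :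
    RelativelyDense {t : ℝ | ∃ m n : ℤ,
      t = m * Real.sin α + n * Real.cos α ∧
      |m * Real.cos α - n * Real.sin α| < δ} := by
  set s := Real.sin α with hsdef
  set c := Real.cos α with hcdef
  set θ := c / s with hθdef
  have hs : (0 : ℝ) < |s| := abs_pos.mpr hsin
  have hcs : c = θ * s := by rw [hθdef]; field_simp
  have hpyth : s ^ 2 + c ^ 2 = 1 := Real.sin_sq_add_cos_sq α
  have hcle : |c| ≤ 1 := Real.abs_cos_le_one α
  clear_value s c
  clear hθdef
  clear_value θ
  set ε := δ / (|s| + 1) with hεdef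
  have hε0 : 0 < ε := div_pos hδ (by linarith)
  have hεδ : |s| * ε < δ := by
    rw [hεdef, mul_comm, div_mul_eq_mul_div, div_lt_iff₀ (by linarith : (0:ℝ) < |s| + 1)]
    nlinarith
  clear_value ε
  -- Dirichlet approximation: find integers with small `k*θ - j`
  obtain ⟨n₀, hn₀⟩ := exists_nat_one_div_lt hε0
  obtain ⟨j, k, hk0, hkn, hjk⟩ :=
    Real.exists_int_int_abs_mul_sub_le θ (n := n₀ + 1) (Nat.succ_pos _)
  have hr0ne : (k : ℝ) * θ - j ≠ 0 := by
    intro h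
    apply hirr
    refine ⟨(j : ℚ) / (k : ℚ), ?_⟩
    have hk : (k : ℝ) ≠ 0 := by exact_mod_cast hk0.ne'
    push_cast
    field_simp
    linarith [h]
  have hjk' : |(k : ℝ) * θ - j| < ε := by
    refine lt_of_le_of_lt hjk (lt_of_le_of_lt ?_ hn₀)
    apply div_le_div_of_nonneg_left (by norm_num) (by positivity)
    push_cast; linarith
  -- get q, p, r with r = q*θ - p and 0 < r < ε
  obtain ⟨q, p, r, hrdef, hr0, hrε⟩ :
      ∃ (q p : ℤ) (r : ℝ), r = (q : ℝ) * θ - p ∧ 0 < r ∧ r < ε := by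
    rcases lt_or_gt_of_ne hr0ne with h | h
    · refine ⟨-k, -j, -((k : ℝ) * θ - j), by push_cast; ring, by linarith, ?_⟩
      rw [abs_of_neg h] at hjk'; linarith
    · exact ⟨k, j, _, rfl, h, by rw [abs_of_pos h] at hjk'; linarith⟩
  set Q : ℝ := |(q : ℝ)| with hQdef
  have hQ0 : 0 ≤ Q := abs_nonneg _
  clear_value Q
  set L : ℝ := 2 * (1 / (2 * |s|) + (1 / r + 1) * Q / |s| + ε) + 1 with hLdef
  clear_value L
  have hL0 : 0 < L := by
    have h1 : 0 ≤ (1 / r + 1) * Q / |s| := by positivity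
    have h2 : 0 < 1 / (2 * |s|) := by positivity
    linarith
  refine ⟨L, hL0, fun a => ?_⟩
  -- target center
  obtain ⟨m₀, hm₀⟩ : ∃ m₀ : ℤ, |(m₀ : ℝ) - (a + L / 2) * s| ≤ 1 / 2 :=
    ⟨round ((a + L / 2) * s), by rw [abs_sub_comm]; exact abs_sub_round _⟩
  obtain ⟨f, n₁, hfeq, hf0, hf1⟩ :
      ∃ (f : ℝ) (n₁ : ℤ), f = (m₀ : ℝ) * θ - n₁ ∧ 0 ≤ f ∧ f < 1 :=
    ⟨Int.fract ((m₀ : ℝ) * θ), ⌊(m₀ : ℝ) * θ⌋, rfl,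
      Int.fract_nonneg _, Int.fract_lt_one _⟩
  obtain ⟨k', hub, hlb, hk'pos⟩ :
      ∃ k' : ℤ, (1 - f) / r ≤ (k' : ℝ) ∧ (k' : ℝ) - 1 < (1 - f) / r ∧
        (0 : ℝ) < (k' : ℝ) := by
    refine ⟨⌈(1 - f) / r⌉, Int.le_ceil _, ?_, ?_⟩
    · have := Int.ceil_lt_add_one ((1 - f) / r); linarith
    · have h1 : 0 < (1 - f) / r := div_pos (by linarith) hr0
      have := Int.le_ceil ((1 - f) / r); linarith
  have hubr : 1 - f ≤ (k' : ℝ) * r := by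
    have := (div_le_iff₀ hr0).mp hub; linarith
  have hlbr : ((k' : ℝ) - 1) * r < 1 - f := (lt_div_iff₀ hr0).mp hlb
  set η : ℝ := f + (k' : ℝ) * r - 1 with hηdef
  have hη0 : 0 ≤ η := by rw [hηdef]; linarith
  have hηr : η < r := by rw [hηdef]; nlinarith
  set m : ℤ := m₀ + k' * q with hmdef
  set n : ℤ := n₁ + k' * p + 1 with hndef
  have key : (m : ℝ) * θ - n = η := by
    rw [hmdef, hndef, hηdef, hfeq, hrdef]
    push_cast
    ring
  clear_value η m n
  -- the error bound
  have herr : (m : ℝ) * c - n * s = s * η := by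
    rw [hcs, ← key]; ring
  have herrlt : |(m : ℝ) * c - n * s| < δ := by
    rw [herr, abs_mul, abs_of_nonneg hη0]
    have h1 : |s| * η < |s| * ε := by nlinarith
    linarith
  -- the value and its location
  have h1s : s + θ * c = 1 / s := by
    rw [eq_div_iff hsin]
    linear_combination hpyth - c * hcs
  have htval : (m : ℝ) * s + n * c = (m : ℝ) / s - η * c := by
    have hn' : (n : ℝ) * c = ((m : ℝ) * θ - η) * c := by rw [← key]; ring
    rw [hn']
    have h2 : (m : ℝ) * s + ((m : ℝ) * θ - η) * c
        = (m : ℝ) * (s + θ * c) - η * c := by ring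
    rw [h2, h1s]
    ring
  have hk'ub : (k' : ℝ) ≤ 1 / r + 1 := by
    have h1 : (1 - f) / r ≤ 1 / r := by
      exact (div_le_div_iff_of_pos_right hr0).mpr (by linarith)
    linarith
  have hmb : |(m : ℝ) - m₀| ≤ (1 / r + 1) * Q := by
    have h2 : (m : ℝ) - m₀ = (k' : ℝ) * q := by rw [hmdef]; push_cast; ring
    rw [h2, abs_mul, abs_of_pos hk'pos, ← hQdef]
    exact mul_le_mul_of_nonneg_right hk'ub hQ0
  refine ⟨(m : ℝ) * s + n * c, ⟨m, n, rfl, herrlt⟩, ?_⟩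
  have hloc : |(m : ℝ) * s + n * c - (a + L / 2)| ≤ (L - 1) / 2 := by
    have hsplit : ((m : ℝ) - m₀) / s + ((m₀ : ℝ) - (a + L / 2) * s) / s
        = (m : ℝ) / s - (a + L / 2) := by
      rw [← add_div]
      have h4 : ((m : ℝ) - m₀) + ((m₀ : ℝ) - (a + L / 2) * s)
          = (m : ℝ) - (a + L / 2) * s := by ring
      rw [h4, sub_div, mul_div_assoc, div_self hsin, mul_one]
    have e1 : (m : ℝ) * s + n * c - (a + L / 2)
        = ((m : ℝ) - m₀) / s + ((m₀ : ℝ) - (a + L / 2) * s) / s - η * c := by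
      rw [htval]; linear_combination -hsplit
    rw [e1]
    have b1 : |((m : ℝ) - m₀) / s| ≤ (1 / r + 1) * Q / |s| := by
      rw [abs_div]
      exact (div_le_div_iff_of_pos_right hs).mpr hmb
    have b2 : |((m₀ : ℝ) - (a + L / 2) * s) / s| ≤ 1 / 2 / |s| := by
      rw [abs_div]
      exact (div_le_div_iff_of_pos_right hs).mpr hm₀
    have b3 : |η * c| ≤ ε := by
      rw [abs_mul, abs_of_nonneg hη0]
      nlinarith
    calc |((m : ℝ) - m₀) / s + ((m₀ : ℝ) - (a + L / 2) * s) / s - η * c|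
        ≤ |((m : ℝ) - m₀) / s + ((m₀ : ℝ) - (a + L / 2) * s) / s| + |η * c| :=
          abs_sub _ _
      _ ≤ |((m : ℝ) - m₀) / s| + |((m₀ : ℝ) - (a + L / 2) * s) / s| + |η * c| := by
          linarith [abs_add_le (((m : ℝ) - m₀) / s) (((m₀ : ℝ) - (a + L / 2) * s) / s)]
      _ ≤ (1 / r + 1) * Q / |s| + 1 / 2 / |s| + ε := by linarith
      _ = (L - 1) / 2 := by rw [hLdef]; ring
  rw [abs_sub_le_iff] at hloc
  constructor <;> linarith [hloc.1, hloc.2]
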